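/- arXiv:1405.4021 — 7 statements merged into one kernel-verified Lean document; each statement's English description precedes it below -/
import Mathlib

section
/- If an SLDDB-system S is correct with respect to a program P and query Q, then every computed answer tuple (c_1,...,c_m) of S over a database DB corresponds to a goal answer(c_1,...,c_m) that is derivable by a finite sequence of SLD-derivation steps from the extended query Q ∧ answer(X_1,...,X_m) using rules of P and facts of DB. Formally: for any finite state sequence s_0,...,s_n with s_0 the initial state, each consecutive pair related by an ε-transition or an F-transition with F ∈ DB, and answer(c_1,...,c_m) ∈ goals(s_n), there is an SLD-derivation of the goal answer(c_1,...,c_m) from the extended query using rules in P and facts in DB. -/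
/-- Correctness of SLD-simulation.
An SLDDB-system consists of states `St`, a goal set `goals s` for each state,
an initial state `init`, ε-transitions `epsTrans` and fact-transitions `factTrans F`.
If the system is correct w.r.t. the extended query `q0` (conditions `hinit`, `heps`, `hfact`),
then for every state sequence from `init` (using ε-transitions and transitions with facts in `DB`)
whose final state contains `answer c`, there is an SLD-derivation of `answer c` from `q0`
using program-rule steps (`step none`) and fact steps with facts in `DB`. -/
theorem sld_simulation_correct
    {St G Fact Tuple : Type*}
    (step : Option Fact → G → G → Prop)
    (goals : St → Set G) (init : St)
    (epsTrans : St → St → Prop) (factTrans : Fact → St → St → Prop)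
    (hne : ∀ s, (goals s).Nonempty)
    (q0 : G) (answer : Tuple → G)
    (DB : Set Fact)
    (hinit : ∀ g ∈ goals init, Relation.ReflTransGen (step none) q0 g)
    (heps : ∀ s1 s2, epsTrans s1 s2 → ∀ g2 ∈ goals s2, ∃ g1 ∈ goals s1,
      ∃ g', step none g1 g' ∧ g' ∈ goals s2 ∧ Relation.ReflTransGen (step none) g' g2)
    (hfact : ∀ F s1 s2, factTrans F s1 s2 → ∀ g2 ∈ goals s2, ∃ g1 ∈ goals s1,
      ∃ g', step (some F) g1 g' ∧ g' ∈ goals s2 ∧ Relation.ReflTransGen (step none) g' g2)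
    (s : St)
    (hreach : Relation.ReflTransGen
      (fun s1 s2 => epsTrans s1 s2 ∨ ∃ F ∈ DB, factTrans F s1 s2) init s)
    (c : Tuple) (hans : answer c ∈ goals s) :
    Relation.ReflTransGen
      (fun g g' => step none g g' ∨ ∃ F ∈ DB, step (some F) g g') q0 (answer c) := by
  set R : G → G → Prop := fun g g' => step none g g' ∨ ∃ F ∈ DB, step (some F) g g' with hR
  have hmono : ∀ {a b : G}, Relation.ReflTransGen (step none) a b →
      Relation.ReflTransGen R a b := by
    intro a b h
    exact Relation.ReflTransGen.mono (fun x y hxy => Or.inl hxy) a b h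
  suffices H : ∀ g ∈ goals s, Relation.ReflTransGen R q0 g from H _ hans
  clear hans
  induction hreach with
  | refl => intro g hg; exact hmono (hinit g hg)
  | @tail s1 s2 hab hbc ih =>
    intro g2 hg2
    rcases hbc with h | ⟨F, hF, h⟩
    · obtain ⟨g1, hg1, g', hs, _, htail⟩ := heps s1 s2 h g2 hg2
      exact ((ih g1 hg1).tail (Or.inl hs)).trans (hmono htail)
    · obtain ⟨g1, hg1, g', hs, _, htail⟩ := hfact F s1 s2 h g2 hg2
      exact ((ih g1 hg1).tail (Or.inr ⟨F, hF, hs⟩)).trans (hmono htail)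
end

section
/- If an SLDDB-system S is complete with respect to a program P and query Q (up to a goal-equivalence relation 'variant'), then for every SLD-derivation of a goal g from the extended query using rules of P and facts of a database DB, there exists a finite state sequence s_0,...,s_n of S starting from the initial state, with each transition either an ε-transition or an F-transition for some F ∈ DB, such that some variant of g belongs to goals(s_n) (or to goals(s_i) for some i ≤ n). -/
/-- Completeness of SLD-simulation.
If an SLDDB-system is complete w.r.t. the extended query `q0`
(conditions `hinit`, `heps`, `hfact`), up to a goal-equivalence `variant`
compatible with the step relation, then for every SLD-derivation of a goal `g`
from `q0` using rules and facts of `DB`, there is a state sequence from `init`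
(ε-transitions and transitions with facts of `DB`) whose final state contains
a variant of `g`. -/
theorem sld_simulation_complete
    {St G Fact : Type*}
    (step : Option Fact → G → G → Prop)
    (goals : St → Set G) (init : St)
    (epsTrans : St → St → Prop) (factTrans : Fact → St → St → Prop)
    (hne : ∀ s, (goals s).Nonempty)
    (variant : G → G → Prop)
    (hequiv : Equivalence variant)
    (hcompat : ∀ (o : Option Fact) g h g', variant g h → step o g g' →
      ∃ h', step o h h' ∧ variant g' h')
    (q0 : G)
    (DB : Set Fact)
    (hinit : q0 ∈ goals init)
    (heps : ∀ s g g', g ∈ goals s → step none g g' →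
      ∃ g'', variant g' g'' ∧
        (g'' ∈ goals s ∨ ∃ s', epsTrans s s' ∧ g'' ∈ goals s'))
    (hfact : ∀ s g g' F, g ∈ goals s → step (some F) g g' →
      ∃ s' g'', factTrans F s s' ∧ variant g' g'' ∧ g'' ∈ goals s')
    (g : G)
    (hderiv : Relation.ReflTransGen
      (fun g g' => step none g g' ∨ ∃ F ∈ DB, step (some F) g g') q0 g) :
    ∃ s, Relation.ReflTransGen
        (fun s1 s2 => epsTrans s1 s2 ∨ ∃ F ∈ DB, factTrans F s1 s2) init s ∧
      ∃ g'', variant g g'' ∧ g'' ∈ goals s := by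
  induction hderiv with
  | refl => exact ⟨init, Relation.ReflTransGen.refl, q0, hequiv.refl q0, hinit⟩
  | tail _ hstep ih =>
    rename_i b c _
    obtain ⟨s, hreach, g'', hvar, hmem⟩ := ih
    rcases hstep with h | ⟨F, hF, h⟩
    · obtain ⟨h', hstep', hvar'⟩ := hcompat none b g'' c hvar h
      obtain ⟨g3, hvar3, hg3⟩ := heps s g'' h' hmem hstep'
      rcases hg3 with hg3 | ⟨s', hs', hg3⟩
      · exact ⟨s, hreach, g3, hequiv.trans hvar' hvar3, hg3⟩
      · exact ⟨s', hreach.tail (Or.inl hs'), g3, hequiv.trans hvar' hvar3, hg3⟩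
    · obtain ⟨h', hstep', hvar'⟩ := hcompat (some F) b g'' c hvar h
      obtain ⟨s', g3, hs', hvar3, hg3⟩ := hfact s g'' h' F hmem hstep'
      exact ⟨s', hreach.tail (Or.inr ⟨F, hF, hs'⟩), g3, hequiv.trans hvar' hvar3, hg3⟩
end

section
/- If a program P contains no facts with IDB head (every rule has a nonempty body) and has no left recursion (the predicate of the first body literal of each rule does not depend, directly or indirectly via the 'calls' relation through first body literals, on the predicate in the rule head), then cl_P(G) is finite for every finite set of goals G. -/
/-- If the program has no IDB facts (every rule-only SLD step
replaces the leading literal by a nonempty body, so every step determines a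
first-literal predicate) and no left recursion (the first-literal call
relation `succ` on the finite predicate set has irreflexive transitive
closure), then `cl_P(S)` is finite for every finite set of goals `S`.
Here `fp g` is the predicate of the first literal of goal `g`, every
rule-only step leads from a goal with first predicate `p` to one with first
predicate `q` where `p ≻ q` (`hfp`), and each goal has only finitely many
successor goals (finitely many rules and mgus). -/
theorem cl_finite_of_no_left_recursion {G Pred : Type*} [Fintype Pred]
    (step : G → G → Prop) (norm : G → G)
    (succ : Pred → Pred → Prop)
    (hnlr : Irreflexive (Relation.TransGen succ))
    (fp : G → Pred)
    (hfp : ∀ g g', step g g' → succ (fp g) (fp g'))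
    (hbranch : ∀ g, {g' | step g g'}.Finite)
    (S : Set G) (hS : S.Finite) :
    {x | ∃ g ∈ S, ∃ g', Relation.ReflTransGen step g g' ∧ x = norm g'}.Finite := by
  -- the flipped transitive closure is a transitive irreflexive relation on a
  -- finite type, hence well-founded
  have hirr : IsIrrefl Pred (Relation.TransGen (flip succ)) :=
    ⟨fun a h => hnlr a h.swap⟩
  have htrans : IsTrans Pred (Relation.TransGen (flip succ)) := ⟨fun _ _ _ => .trans⟩
  have hwf : WellFounded (Relation.TransGen (flip succ)) :=
    Finite.wellFounded_of_trans_of_irrefl _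
  have key : ∀ p : Pred, ∀ g : G, fp g = p →
      {g' | Relation.ReflTransGen step g g'}.Finite := by
    intro p
    induction p using hwf.induction with
    | _ p ih =>
      intro g hg
      have hsub : {g' | Relation.ReflTransGen step g g'} ⊆
          {g} ∪ ⋃ h ∈ {h | step g h}, {g' | Relation.ReflTransGen step h g'} := by
        intro x hx
        rcases Relation.ReflTransGen.cases_head hx with rfl | ⟨c, hc, hcx⟩
        · exact Or.inl rfl
        · exact Or.inr (Set.mem_biUnion hc hcx)
      refine Set.Finite.subset ?_ hsub
      refine (Set.finite_singleton g).union ((hbranch g).biUnion fun h hh => ?_)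
      exact ih (fp h) (Relation.TransGen.single (hg ▸ hfp g h hh)) h rfl
  have : {x | ∃ g ∈ S, ∃ g', Relation.ReflTransGen step g g' ∧ x = norm g'} =
      ⋃ g ∈ S, norm '' {g' | Relation.ReflTransGen step g g'} := by
    ext x
    simp only [Set.mem_setOf_eq, Set.mem_iUnion, Set.mem_image]
    constructor
    · rintro ⟨g, hg, g', h1, rfl⟩; exact ⟨g, hg, g', h1, rfl⟩
    · rintro ⟨g, hg, g', h1, rfl⟩; exact ⟨g, hg, g', h1, rfl⟩
  rw [this]
  exact hS.biUnion fun g _ => ((key (fp g) g rfl).image norm)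
end

section
/- If a program is at most tail-recursive, then the lengths of goals occurring in any SLD-derivation from a fixed query are bounded; consequently, over a fixed finite set of constants, only finitely many normalized goals occur, and the SLDDB-system with single-goal states and duplicate elimination (no repeated states in a sequence) admits only finitely many states and all state sequences have bounded length (termination). -/
/-- At most tail-recursive programs have bounded goal lengths.
Goals are lists of literals over a finite vocabulary `Lit` (finitely many
predicates, constants, normalized variables).  Each rule `r ∈ rules` has a
head predicate `r.1` and body `r.2`; a level function witnesses the
stratification: all body literals except possibly the last have strictly
smaller level than the head, the last has level at most that of the head
(tail recursion only).  An SLD step replaces the leading literal by an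
instance of a matching rule body (same predicate list).  Then: goal lengths
in derivations from `g0` are bounded, only finitely many goals are reachable,
and state sequences without repeated states have bounded length
(termination). -/
theorem tail_recursion_bounded_goals_and_termination
    {Lit Pred : Type*} [Fintype Lit]
    (pred : Lit → Pred)
    (rules : Set (Pred × List Lit)) (hrules : rules.Finite)
    (level : Pred → ℕ)
    (htail : ∀ r ∈ rules, ∀ L ∈ r.2.dropLast, level (pred L) < level r.1)
    (hlast : ∀ r ∈ rules, ∀ L ∈ r.2.getLast?, level (pred L) ≤ level r.1)
    (step : List Lit → List Lit → Prop)
    (hstep : ∀ g g', step g g' ↔ ∃ (L : Lit) (R B : List Lit),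
      g = L :: R ∧ g' = B ++ R ∧
      ∃ r ∈ rules, r.1 = pred L ∧ B.map pred = r.2.map pred)
    (g0 : List Lit) :
    (∃ Bnd : ℕ, ∀ g, Relation.ReflTransGen step g0 g → g.length ≤ Bnd) ∧
    {g | Relation.ReflTransGen step g0 g}.Finite ∧
    (∃ N : ℕ, ∀ l : List (List Lit),
      (∀ g ∈ l, Relation.ReflTransGen step g0 g) → l.Chain' step → l.Nodup →
      l.length ≤ N) := by
  classical
  set K : ℕ := hrules.toFinset.sup (fun r => r.2.length) with hKdef
  set m : ℕ := (Finset.univ : Finset Lit).sup (fun L => level (pred L)) with hmdef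
  set C : ℕ := g0.length + (K - 1) * m with hCdef
  have hlev : ∀ L : Lit, level (pred L) ≤ m := by
    intro L; rw [hmdef]
    exact Finset.le_sup (f := fun L : Lit => level (pred L)) (Finset.mem_univ L)
  -- key invariant
  have key : ∀ g, Relation.ReflTransGen step g0 g →
      ∀ i (h : i < g.length),
        (g.length - 1 - i) + (K - 1) * level (pred (g.get ⟨i, h⟩)) ≤ C := by
    intro g hg
    induction hg with
    | refl =>
        intro i h
        have h1 : (K - 1) * level (pred (g0.get ⟨i, h⟩)) ≤ (K - 1) * m :=
          Nat.mul_le_mul_left _ (hlev _)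
        have h2 : g0.length - 1 - i ≤ g0.length := by omega
        omega
    | @tail b c hab hbc ih =>
        rw [hstep] at hbc
        obtain ⟨L, R, B, hb, hc, r, hr, hr1, hmap⟩ := hbc
        subst hb hc
        have hlen : B.length = r.2.length := by
          have := congrArg List.length hmap; simpa using this
        have hBK : B.length ≤ K := by
          rw [hlen, hKdef]
          exact Finset.le_sup (f := fun r : Pred × List Lit => r.2.length)
            (hrules.mem_toFinset.mpr hr)
        have hpredB : ∀ j (hj : j < B.length),
            pred (B.get ⟨j, hj⟩) = pred (r.2.get ⟨j, by omega⟩) := by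
          intro j hj
          have h1 : (B.map pred)[j]? = (r.2.map pred)[j]? := by rw [hmap]
          rw [List.getElem?_map, List.getElem?_map,
            List.getElem?_eq_getElem hj, List.getElem?_eq_getElem (by omega)] at h1
          simpa using h1
        have h0 : R.length + (K - 1) * level (pred L) ≤ C := by
          have := ih 0 (by simp)
          simpa using this
        intro i hi
        have hlenBR : (B ++ R).length = B.length + R.length := by simp
        rcases lt_or_ge i B.length with hiB | hiB
        · -- i within the new body B
          have hgetc : (B ++ R).get ⟨i, hi⟩ = B.get ⟨i, hiB⟩ := by
            simp [List.getElem_append_left hiB]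
          have hir : i < r.2.length := by omega
          rcases eq_or_lt_of_le (Nat.succ_le_of_lt hiB) with hlast' | hmid
          · -- last literal of the body
            have hlev' : level (pred ((B ++ R).get ⟨i, hi⟩)) ≤ level (pred L) := by
              rw [hgetc, hpredB i hiB, ← hr1]
              refine hlast r hr _ ?_
              show r.2.getLast? = some _
              rw [List.getLast?_eq_getElem?,
                show r.2.length - 1 = i from by omega,
                List.getElem?_eq_getElem hir]
              rfl
            have h1 : (K - 1) * level (pred ((B ++ R).get ⟨i, hi⟩)) ≤
                (K - 1) * level (pred L) := Nat.mul_le_mul_left _ hlev'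
            omega
          · -- strictly before the last literal of the body
            have hdl : i < r.2.dropLast.length := by
              rw [List.length_dropLast]; omega
            have hlev' : level (pred ((B ++ R).get ⟨i, hi⟩)) < level (pred L) := by
              rw [hgetc, hpredB i hiB, ← hr1]
              refine htail r hr _ ?_
              have hget : r.2.dropLast.get ⟨i, hdl⟩ = r.2.get ⟨i, hir⟩ := by
                simp [List.getElem_dropLast]
              rw [← hget]
              exact List.get_mem _ _
            have h1 : (K - 1) * (level (pred ((B ++ R).get ⟨i, hi⟩)) + 1) ≤
                (K - 1) * level (pred L) := Nat.mul_le_mul_left _ hlev'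
            have h2 : (K - 1) * (level (pred ((B ++ R).get ⟨i, hi⟩)) + 1) =
                (K - 1) * level (pred ((B ++ R).get ⟨i, hi⟩)) + (K - 1) := by ring
            omega
        · -- i within the old remainder R
          have hj : i - B.length < R.length := by omega
          have hgetc : (B ++ R).get ⟨i, hi⟩ = R.get ⟨i - B.length, hj⟩ := by
            simp [List.getElem_append_right hiB]
          have hjb : i - B.length + 1 < (L :: R).length := by simp; omega
          have hgetb : (L :: R).get ⟨i - B.length + 1, hjb⟩
              = R.get ⟨i - B.length, hj⟩ := by simp
          have hih := ih (i - B.length + 1) hjb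
          rw [hgetb, ← hgetc] at hih
          have hblen : (L :: R).length = R.length + 1 := by simp
          omega
  -- length bound
  have hBnd : ∀ g, Relation.ReflTransGen step g0 g → g.length ≤ C + 1 := by
    intro g hg
    cases g with
    | nil => simp
    | cons a t =>
        have := key _ hg 0 (by simp)
        simp only [List.length_cons] at this ⊢
        omega
  refine ⟨⟨C + 1, hBnd⟩, ?_, ?_⟩
  · exact (List.finite_length_le Lit (C + 1)).subset (fun g hg => hBnd g hg)
  · have hfin : {g | Relation.ReflTransGen step g0 g}.Finite :=
      (List.finite_length_le Lit (C + 1)).subset (fun g hg => hBnd g hg)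
    refine ⟨hfin.toFinset.card, fun l hmem _ hnodup => ?_⟩
    have hsub : l.toFinset ⊆ hfin.toFinset := by
      intro g hg
      rw [Set.Finite.mem_toFinset]
      exact hmem g (List.mem_toFinset.mp hg)
    calc l.length = l.toFinset.card := (List.toFinset_card_of_nodup hnodup).symm
      _ ≤ hfin.toFinset.card := Finset.card_le_card hsub
end

section
/- Maximal-state transitions process one database fact per step, and this is optimal in the following sense: if a state sequence s_0, s_1, ..., s_n of the maximal-states SLDDB-system computes an answer using transitions labeled by facts F_1, ..., F_n ∈ DB, then there is an SLD-refutation of the extended query that uses exactly the facts F_1, ..., F_n in that order (and uses each transition's fact exactly once). -/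
namespace MaxStates10

variable {G Fact : Type*}

/-- Rule-only closure followed by normalization: `cl_P`. -/
def cl (step : Option Fact → G → G → Prop) (norm : G → G) (S : Set G) : Set G :=
  {x | ∃ g ∈ S, ∃ g', Relation.ReflTransGen (step none) g g' ∧ x = norm g'}

/-- Successor state of the maximal-states construction for fact `F`. -/
def succState (step : Option Fact → G → G → Prop) (norm : G → G)
    (s : Set G) (F : Fact) : Set G :=
  cl step norm {g' | ∃ g ∈ s, step (some F) g g'}

/-- State reached from `s₀ = cl_P({q0})` by the transitions labeled with the
facts `fs` (in order). -/
def stateAt (step : Option Fact → G → G → Prop) (norm : G → G)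
    (q0 : G) (fs : List Fact) : Set G :=
  fs.foldl (succState step norm) (cl step norm {q0})

/-- SLD-derivations recording the list of facts used (in order);
`Deriv step fs g g'` means `g →* g'` where the fact-steps use exactly the
facts `fs`, in that order, each exactly once. -/
inductive Deriv (step : Option Fact → G → G → Prop) : List Fact → G → G → Prop
  | refl (g : G) : Deriv step [] g g
  | rule {g g' g'' : G} {fs : List Fact} :
      step none g g' → Deriv step fs g' g'' → Deriv step fs g g''
  | fact {g g' g'' : G} {fs : List Fact} (F : Fact) :
      step (some F) g g' → Deriv step fs g' g'' → Deriv step (F :: fs) g g''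

lemma deriv_append {step : Option Fact → G → G → Prop} {fs fs' : List Fact}
    {g g' g'' : G} (h : Deriv step fs g g') (h' : Deriv step fs' g' g'') :
    Deriv step (fs ++ fs') g g'' := by
  induction h with
  | refl => simpa using h'
  | rule hs _ ih => exact Deriv.rule hs (ih h')
  | fact F hs _ ih => exact Deriv.fact F hs (ih h')

lemma deriv_of_rtg {step : Option Fact → G → G → Prop} {g g' : G}
    (h : Relation.ReflTransGen (step none) g g') : Deriv step [] g g' := by
  induction h with
  | refl => exact Deriv.refl g
  | tail _ hs ih => exact deriv_append ih (Deriv.rule hs (Deriv.refl _))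

lemma rtg_lift {step : Option Fact → G → G → Prop} {norm : G → G}
    (hcomm : ∀ (o : Option Fact) g h g', norm g = norm h → step o g g' →
      ∃ h', step o h h' ∧ norm h' = norm g')
    {a a' : G} (h : Relation.ReflTransGen (step none) a a') :
    ∀ b, norm a = norm b →
      ∃ b', Relation.ReflTransGen (step none) b b' ∧ norm a' = norm b' := by
  induction h with
  | refl => exact fun b hb => ⟨b, Relation.ReflTransGen.refl, hb⟩
  | tail _ hs ih =>
    intro b hb
    obtain ⟨b'', hb'', hn⟩ := ih b hb
    obtain ⟨h', hstep, hn'⟩ := hcomm none _ b'' _ hn hs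
    exact ⟨h', hb''.tail hstep, hn'.symm⟩

lemma main_aux {step : Option Fact → G → G → Prop} {norm : G → G} {q0 : G}
    (hidem : ∀ g, norm (norm g) = norm g)
    (hcomm : ∀ (o : Option Fact) g h g', norm g = norm h → step o g g' →
      ∃ h', step o h h' ∧ norm h' = norm g') :
    ∀ (fs : List Fact) (s : Set G) (ps : List Fact),
    (∀ x ∈ s, norm x = x ∧ ∃ g, Deriv step ps q0 g ∧ norm g = x) →
    ∀ x ∈ fs.foldl (succState step norm) s,
      ∃ g, Deriv step (ps ++ fs) q0 g ∧ norm g = x := by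
  intro fs
  induction fs with
  | nil =>
    intro s ps hinv x hx
    simpa using (hinv x hx).2
  | cons F fs ih =>
    intro s ps hinv x hx
    have : ∃ g, Deriv step ((ps ++ [F]) ++ fs) q0 g ∧ norm g = x := by
      refine ih (succState step norm s F) (ps ++ [F]) ?_ x hx
      rintro y ⟨g', ⟨g, hg, hstepF⟩, g'', hrtg, rfl⟩
      refine ⟨hidem _, ?_⟩
      obtain ⟨hnormg, g₀, hder, hng₀⟩ := hinv g hg
      -- lift the fact step from g to g₀
      obtain ⟨h₀, hstep₀, hn₀⟩ := hcomm (some F) g g₀ g' (hnormg.trans hng₀.symm) hstepF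
      -- lift the rule chain from g' to h₀
      obtain ⟨b', hrtg', hnb'⟩ := rtg_lift hcomm hrtg h₀ hn₀.symm
      exact ⟨b', deriv_append hder (Deriv.fact F hstep₀ (deriv_of_rtg hrtg')), hnb'.symm⟩
    simpa using this

/-- one database fact is processed per maximal-state transition,
and this matches SLD-resolution exactly: if the state sequence with transition
labels `F₁,...,Fₙ` computes an answer (the final state contains the ground
answer goal `answer t`), then there is an SLD-refutation of the extended query
`q0` reaching the answer goal which uses exactly the facts `F₁,...,Fₙ`, in
that order. -/
theorem maximal_states_use_facts_exactly
    {Tuple : Type*}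
    (step : Option Fact → G → G → Prop) (norm : G → G)
    (q0 : G) (answer : Tuple → G)
    (hidem : ∀ g, norm (norm g) = norm g)
    (hq0 : norm q0 = q0)
    (hans : ∀ t, norm (answer t) = answer t)
    (hcomm : ∀ (o : Option Fact) g h g', norm g = norm h → step o g g' →
      ∃ h', step o h h' ∧ norm h' = norm g')
    (fs : List Fact) (t : Tuple)
    (hcomputed : answer t ∈ stateAt step norm q0 fs) :
    ∃ g, Deriv step fs q0 g ∧ norm g = answer t := by
  have h0 : ∀ x ∈ cl step norm {q0}, norm x = x ∧
      ∃ g, Deriv step [] q0 g ∧ norm g = x := by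
    rintro y ⟨g, rfl, g', hrtg, rfl⟩
    exact ⟨hidem _, g', deriv_of_rtg hrtg, rfl⟩
  obtain ⟨g, hd, hn⟩ :=
    main_aux (q0 := q0) hidem hcomm fs (cl step norm {q0}) [] h0 (answer t) hcomputed
  exact ⟨g, by simpa using hd, hn⟩

end MaxStates10
end

section
/- The maximal-states construction is complete: for every SLD-derivation g₀ →* g from the extended query g₀ using rule-steps and fact-steps with facts F₁,...,F_k (in order of use), the state s_k reached from s₀ by the transitions labeled F₁,...,F_k in the maximal-states system contains norm(g). -/
namespace MaxStates11

variable {G Fact : Type*}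

/-- Rule-only closure followed by normalization: `cl_P`. -/
def cl (step : Option Fact → G → G → Prop) (norm : G → G) (S : Set G) : Set G :=
  {x | ∃ g ∈ S, ∃ g', Relation.ReflTransGen (step none) g g' ∧ x = norm g'}

/-- Successor state of the maximal-states construction for fact `F`. -/
def succState (step : Option Fact → G → G → Prop) (norm : G → G)
    (s : Set G) (F : Fact) : Set G :=
  cl step norm {g' | ∃ g ∈ s, step (some F) g g'}

/-- State reached from `s₀ = cl_P({q0})` by the transitions labeled with the
facts `fs` (in order). -/
def stateAt (step : Option Fact → G → G → Prop) (norm : G → G)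
    (q0 : G) (fs : List Fact) : Set G :=
  fs.foldl (succState step norm) (cl step norm {q0})

/-- SLD-derivations recording the list of facts used (in order). -/
inductive Deriv (step : Option Fact → G → G → Prop) : List Fact → G → G → Prop
  | refl (g : G) : Deriv step [] g g
  | rule {g g' g'' : G} {fs : List Fact} :
      step none g g' → Deriv step fs g' g'' → Deriv step fs g g''
  | fact {g g' g'' : G} {fs : List Fact} (F : Fact) :
      step (some F) g g' → Deriv step fs g' g'' → Deriv step (F :: fs) g g''

theorem aux_complete
    (step : Option Fact → G → G → Prop) (norm : G → G)
    (hidem : ∀ g, norm (norm g) = norm g)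
    (hcomm : ∀ (o : Option Fact) g h g', norm g = norm h → step o g g' →
      ∃ h', step o h h' ∧ norm h' = norm g') :
    ∀ {fs : List Fact} {g g'' : G}, Deriv step fs g g'' →
      ∀ S : Set G, norm g ∈ cl step norm S →
        norm g'' ∈ fs.foldl (succState step norm) (cl step norm S) := by
  intro fs g g'' hd
  induction hd with
  | refl g => intro S hS; exact hS
  | rule hstep hd ih =>
    rename_i g g' g'' fs
    intro S hS
    apply ih
    obtain ⟨g₁, hg₁, g₂, hreach, heq⟩ := hS
    obtain ⟨h', hh', hn⟩ := hcomm none g g₂ g' heq hstep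
    exact ⟨g₁, hg₁, h', hreach.tail hh', hn.symm⟩
  | fact F hstep hd ih =>
    rename_i g g' g'' fs
    intro S hS
    obtain ⟨g₁, hg₁, g₂, hreach, heq⟩ := hS
    obtain ⟨h', hh', hn⟩ := hcomm (some F) g g₂ g' heq hstep
    obtain ⟨h'', hh'', hn'⟩ := hcomm (some F) g₂ (norm g₂) h' (hidem g₂).symm hh'
    have hmem : norm g₂ ∈ cl step norm S := ⟨g₁, hg₁, g₂, hreach, rfl⟩
    have : norm g' ∈ succState step norm (cl step norm S) F :=
      ⟨h'', ⟨norm g₂, hmem, hh''⟩, h'', Relation.ReflTransGen.refl,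
        by rw [hn', hn]⟩
    simpa [succState] using ih _ this

/-- completeness of the maximal-states construction.  For every
SLD-derivation `q0 →* g` whose fact-steps use the facts `F₁,...,F_k` in order,
the state reached from `s₀ = cl_P({q0})` by the transitions labeled
`F₁,...,F_k` contains `norm g`.  (Normalization commutes with SLD steps.) -/
theorem maximal_states_complete
    (step : Option Fact → G → G → Prop) (norm : G → G)
    (q0 : G)
    (hidem : ∀ g, norm (norm g) = norm g)
    (hcomm : ∀ (o : Option Fact) g h g', norm g = norm h → step o g g' →
      ∃ h', step o h h' ∧ norm h' = norm g')
    (fs : List Fact) (g : G)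
    (hderiv : Deriv step fs q0 g) :
    norm g ∈ stateAt step norm q0 fs := by
  exact aux_complete step norm hidem hcomm hderiv {q0}
    ⟨q0, rfl, q0, Relation.ReflTransGen.refl, rfl⟩

end MaxStates11
end

section
/- If the states of an SLDDB-system form a finite set and duplicate states within a sequence are disallowed, then the set of computed answer tuples over any database DB is computable by a terminating procedure, and every answer is witnessed by a state sequence of length at most |Σ|. -/
private theorem dup_split {α : Type*} {x : α} {l : List α} (h : List.Duplicate x l) :
    ∃ a b c : List α, l = a ++ x :: b ++ x :: c := by
  induction h with
  | cons_mem hm =>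
      obtain ⟨b, c, rfl⟩ := List.append_of_mem hm
      exact ⟨[], b, c, rfl⟩
  | @cons_duplicate y l _ ih =>
      obtain ⟨a, b, c, rfl⟩ := ih
      exact ⟨y :: a, b, c, rfl⟩

private theorem shorten {α : Type*} (r : α → α → Prop) :
    ∀ n (L : List α), L.length ≤ n → L ≠ [] → L.Chain' r →
      ∃ L', L'.Chain' r ∧ L' ≠ [] ∧ L'.head? = L.head? ∧ L'.getLast? = L.getLast? ∧
        L'.Nodup := by
  intro n
  induction n with
  | zero => intro L hlen hne _; cases L <;> simp_all
  | succ n ih =>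
      intro L hlen hne hch
      by_cases hnd : L.Nodup
      · exact ⟨L, hch, hne, rfl, rfl, hnd⟩
      · obtain ⟨x, hx⟩ := List.exists_duplicate_iff_not_nodup.2 hnd
        obtain ⟨a, b, c, rfl⟩ := dup_split hx
        set M := a ++ x :: c with hM
        have hsuf : (x :: c) <:+ (a ++ x :: b ++ x :: c) := by
          refine ⟨a ++ x :: b, by simp⟩
        have hchM : M.Chain' r := by
          rw [hM, List.Chain', List.isChain_append]
          have h1 := List.isChain_append.1 (by simpa [List.Chain'] using hch)
          refine ⟨h1.1, hch.suffix hsuf, ?_⟩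
          intro y hy z hz
          simp at hz
          subst hz
          exact h1.2.2 y hy x (by simp)
        have hlenM : M.length ≤ n := by
          have : M.length < (a ++ x :: b ++ x :: c).length := by simp [hM]
          omega
        obtain ⟨L', h1, h2, h3, h4, h5⟩ := ih M hlenM (by simp [hM]) hchM
        refine ⟨L', h1, h2, ?_, ?_, h5⟩
        · rw [h3, hM]
          cases a <;> simp
        · rw [h4, hM, List.getLast?_append_of_ne_nil _ (by simp),
            List.getLast?_append_of_ne_nil _ (by simp : (x :: c : List α) ≠ [])]

/-- if the state set of an SLDDB-system is finite (and the
database is finite), the computed answers can be found by a terminating,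
finite search: an answer tuple `t` is computed by some state sequence iff it
is computed by a state sequence of length at most `|Σ|` (without loss of
generality repetition-free), so the set of computed answers is obtained as a
finite union over the finitely many such sequences. -/
theorem finite_states_terminating_search
    {St G Fact Tuple : Type*} [Fintype St]
    (goals : St → Set G)
    (epsTrans : St → St → Prop) (factTrans : Fact → St → St → Prop)
    (DB : Set Fact) (hDB : DB.Finite)
    (s0 : St) (answer : Tuple → G) :
    ∀ t : Tuple,
      (∃ l : List St,
        List.Chain (fun s s' => epsTrans s s' ∨ ∃ F ∈ DB, factTrans F s s') s0 l ∧
        answer t ∈ goals ((s0 :: l).getLast (by simp))) ↔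
      (∃ l : List St,
        List.Chain (fun s s' => epsTrans s s' ∨ ∃ F ∈ DB, factTrans F s s') s0 l ∧
        (s0 :: l).length ≤ Fintype.card St ∧
        answer t ∈ goals ((s0 :: l).getLast (by simp))) := by
  intro t
  constructor
  · rintro ⟨l, hch, hg⟩
    set r := fun s s' => epsTrans s s' ∨ ∃ F ∈ DB, factTrans F s s'
    have hch' : (s0 :: l).Chain' r := hch
    obtain ⟨L', h1, h2, h3, h4, h5⟩ :=
      shorten r (s0 :: l).length (s0 :: l) le_rfl (by simp) hch'
    obtain ⟨y, l', rfl⟩ := List.exists_cons_of_ne_nil h2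
    have hy : y = s0 := by simpa using h3
    subst y
    refine ⟨l', h1, h5.length_le_card, ?_⟩
    have hlast : (s0 :: l').getLast (by simp) = (s0 :: l).getLast (by simp) := by
      have e1 := (s0 :: l').getLast?_eq_getLast (by simp)
      have e2 := (s0 :: l).getLast?_eq_getLast (by simp)
      rw [e1, e2] at h4
      exact Option.some_injective _ h4
    rw [hlast]
    exact hg
  · rintro ⟨l, hch, _, hg⟩
    exact ⟨l, hch, hg⟩
end
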